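/- Let k ≥ 2 and n ≥ k be integers. If n!·(1 − 1/k!)^{C(n,k)} < 1, then there exists a k-tournament on an n-element vertex set that has Property O. -/

import Mathlib

/-- An ordered `k`-set (`k`-tuple of distinct elements of `V`), given as an
embedding `Fin k ↪ V`, is *consistent* with a (strict) linear order `r` on `V`
if its entries are increasing with respect to `r`. -/
def Consistent {k : ℕ} {V : Type*} (r : V → V → Prop) (e : Fin k ↪ V) : Prop :=
  ∀ i j : Fin k, i < j → r (e i) (e j)

/-- An *oriented `k`-uniform hypergraph* on `V`: a family of `k`-tuples of
distinct elements of `V` (embeddings `Fin k ↪ V`) such that no two tuples have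
the same underlying `k`-element set. -/
structure OrientedHypergraph (k : ℕ) (V : Type*) where
  edges : Finset (Fin k ↪ V)
  eq_of_range_eq : ∀ e ∈ edges, ∀ f ∈ edges, Set.range ⇑e = Set.range ⇑f → e = f

/-- *Property O*: for every linear order (given by its strict order relation `r`)
on the vertex set, some edge is consistent with it. -/
def PropertyO {k : ℕ} {V : Type*} (H : OrientedHypergraph k V) : Prop :=
  ∀ r : V → V → Prop, IsStrictTotalOrder V r → ∃ e ∈ H.edges, Consistent r e

/-- A *`k`-tournament*: an oriented `k`-uniform hypergraph containing a tuple
for every `k`-element subset of the vertex set (such a tuple is unique by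
`eq_of_range_eq`). -/
def IsTournament {k : ℕ} {V : Type*} (H : OrientedHypergraph k V) : Prop :=
  ∀ S : Finset V, S.card = k → ∃ e ∈ H.edges, Set.range ⇑e = ↑S

open Finset

variable {k n : ℕ}

/-- The canonical increasing (w.r.t. the order `σ x < σ y`) enumeration of `S`. -/
noncomputable def embOfSet (σ : Equiv.Perm (Fin n)) (S : Finset (Fin n)) (hS : S.card = k) :
    Fin k ↪ Fin n :=
  ((S.image σ).orderEmbOfFin
    (by rw [Finset.card_image_of_injective _ σ.injective]; exact hS)).toEmbedding.trans
    σ.symm.toEmbedding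

lemma embOfSet_mem (σ : Equiv.Perm (Fin n)) (S : Finset (Fin n)) (hS : S.card = k) (i : Fin k) :
    embOfSet σ S hS i ∈ S := by
  have := Finset.orderEmbOfFin_mem (S.image σ)
    (by rw [Finset.card_image_of_injective _ σ.injective]; exact hS) i
  simp only [Finset.mem_image] at this
  obtain ⟨x, hx, hxe⟩ := this
  simpa [embOfSet, ← hxe] using hx

lemma map_embOfSet (σ : Equiv.Perm (Fin n)) (S : Finset (Fin n)) (hS : S.card = k) :
    Finset.univ.map (embOfSet σ S hS) = S := by
  apply Finset.eq_of_subset_of_card_le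
  · intro x hx
    simp only [Finset.mem_map, Finset.mem_univ, true_and] at hx
    obtain ⟨i, rfl⟩ := hx
    exact embOfSet_mem σ S hS i
  · simp [hS]

lemma consistent_embOfSet (σ : Equiv.Perm (Fin n)) (S : Finset (Fin n)) (hS : S.card = k) :
    Consistent (fun x y => σ x < σ y) (embOfSet σ S hS) := by
  intro i j hij
  simp only [embOfSet, Function.Embedding.trans_apply, RelEmbedding.coe_toEmbedding,
    Equiv.coe_toEmbedding, Equiv.toEmbedding_apply, Equiv.apply_symm_apply]
  exact (Finset.orderEmbOfFin _ _).strictMono hij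

lemma embOfSet_unique (σ : Equiv.Perm (Fin n)) (S : Finset (Fin n)) (hS : S.card = k)
    (e : Fin k ↪ Fin n) (he : Finset.univ.map e = S)
    (hc : Consistent (fun x y => σ x < σ y) e) : e = embOfSet σ S hS := by
  have hmem : ∀ i, σ (e i) ∈ S.image σ := by
    intro i
    exact Finset.mem_image_of_mem σ (by rw [← he]; simp)
  have hmono : StrictMono (fun i => σ (e i)) := fun i j hij => hc i j hij
  have := Finset.orderEmbOfFin_unique
    (show (S.image σ).card = k by rw [Finset.card_image_of_injective _ σ.injective]; exact hS)
    hmem hmono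
  ext i
  have h2 := congrFun this i
  simp only [embOfSet, Function.Embedding.trans_apply, RelEmbedding.coe_toEmbedding,
    Equiv.coe_toEmbedding, Equiv.toEmbedding_apply, ← h2, Equiv.symm_apply_apply]

section counting

variable (k n : ℕ)

/-- Orientations of a `k`-set `S`. -/
abbrev Orientations (S : Finset (Fin n)) := {e : Fin k ↪ Fin n // Finset.univ.map e = S}

noncomputable def orientEquiv (S : Finset (Fin n)) (hS : S.card = k) :
    Orientations k n S ≃ (Fin k ↪ {x // x ∈ S}) where
  toFun e := ⟨fun i => ⟨e.1 i, by simp [← e.2] ⟩,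
    fun i j hij => e.1.injective (by simpa using congrArg Subtype.val hij)⟩
  invFun f := ⟨f.trans (Function.Embedding.subtype _), by
    have hbij : Function.Bijective f := by
      rw [Fintype.bijective_iff_injective_and_card]
      exact ⟨f.injective, by simp [Fintype.card_coe, hS]⟩
    apply Finset.eq_of_subset_of_card_le
    · intro x hx
      simp only [Finset.mem_map, Finset.mem_univ, true_and] at hx
      obtain ⟨i, rfl⟩ := hx
      exact (f i).2
    · rw [hS, Finset.card_map, Finset.card_univ, Fintype.card_fin]⟩
  left_inv e := by ext i; rfl
  right_inv f := by ext i; rfl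

lemma card_orientations (S : Finset (Fin n)) (hS : S.card = k) :
    Fintype.card (Orientations k n S) = k.factorial := by
  rw [Fintype.card_congr (orientEquiv k n S hS), Fintype.card_embedding_eq,
    Fintype.card_coe, hS, Fintype.card_fin, Nat.descFactorial_self]

end counting

instance {k : ℕ} {V : Type*} (r : V → V → Prop) [DecidableRel r] (e : Fin k ↪ V) :
    Decidable (Consistent r e) :=
  inferInstanceAs (Decidable (∀ i j : Fin k, i < j → r (e i) (e j)))

section main

variable (k n : ℕ)

abbrev KSets := {S : Finset (Fin n) // S.card = k}

abbrev Tourn := ∀ S : KSets k n, Orientations k n S.1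

lemma card_tourn : Fintype.card (Tourn k n) = k.factorial ^ n.choose k := by
  rw [Fintype.card_pi, Finset.prod_congr rfl (fun S _ => card_orientations k n S.1 S.2),
    Finset.prod_const, Finset.card_univ, Fintype.card_finset_len, Fintype.card_fin]

lemma card_bad (σ : Equiv.Perm (Fin n)) :
    Fintype.card {T : Tourn k n // ∀ S, ¬ Consistent (fun x y => σ x < σ y) (T S).1}
      = (k.factorial - 1) ^ n.choose k := by
  rw [Fintype.card_congr (Equiv.subtypePiEquivPi
    (p := fun (S : KSets k n) (e : Orientations k n S.1) =>
      ¬ Consistent (fun x y => σ x < σ y) e.1)), Fintype.card_pi]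
  have key : ∀ S : KSets k n,
      Fintype.card {e : Orientations k n S.1 // ¬ Consistent (fun x y => σ x < σ y) e.1}
        = k.factorial - 1 := by
    intro S
    rw [Fintype.card_subtype_compl]
    have h1 : Fintype.card
        {e : Orientations k n S.1 // Consistent (fun x y => σ x < σ y) e.1} = 1 := by
      rw [Fintype.card_eq_one_iff]
      refine ⟨⟨⟨embOfSet σ S.1 S.2, map_embOfSet σ S.1 S.2⟩, consistent_embOfSet σ S.1 S.2⟩, ?_⟩
      rintro ⟨⟨e, he⟩, hc⟩
      simp only [Subtype.mk.injEq]
      exact embOfSet_unique σ S.1 S.2 e he hc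
    rw [h1, card_orientations k n S.1 S.2]
  rw [Finset.prod_congr rfl (fun S _ => key S), Finset.prod_const, Finset.card_univ,
    Fintype.card_finset_len, Fintype.card_fin]

lemma exists_good
    (hnum : n.factorial * (k.factorial - 1) ^ n.choose k < k.factorial ^ n.choose k) :
    ∃ T : Tourn k n, ∀ σ : Equiv.Perm (Fin n),
      ∃ S, Consistent (fun x y => σ x < σ y) (T S).1 := by
  by_contra hcon
  push_neg at hcon
  have hsub : (Finset.univ : Finset (Tourn k n)) ⊆
      Finset.univ.biUnion (fun σ : Equiv.Perm (Fin n) =>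
        Finset.univ.filter (fun T => ∀ S, ¬ Consistent (fun x y => σ x < σ y) (T S).1)) := by
    intro T _
    obtain ⟨σ, hσ⟩ := hcon T
    exact Finset.mem_biUnion.2 ⟨σ, Finset.mem_univ _, Finset.mem_filter.2 ⟨Finset.mem_univ _, hσ⟩⟩
  have hle := (Finset.card_le_card hsub).trans Finset.card_biUnion_le
  have hfil : ∀ σ : Equiv.Perm (Fin n),
      (Finset.univ.filter
        (fun T : Tourn k n => ∀ S, ¬ Consistent (fun x y => σ x < σ y) (T S).1)).card
        = (k.factorial - 1) ^ n.choose k := by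
    intro σ
    rw [← Fintype.card_subtype, card_bad]
  rw [Finset.card_univ, card_tourn] at hle
  rw [Finset.sum_congr rfl (fun σ _ => hfil σ), Finset.sum_const, Finset.card_univ,
    Fintype.card_perm, Fintype.card_fin, smul_eq_mul] at hle
  exact absurd hle (not_le.2 hnum)

lemma numeric_bound (hk : 2 ≤ k)
    (h : (n.factorial : ℝ) * (1 - 1 / (k.factorial : ℝ)) ^ n.choose k < 1) :
    n.factorial * (k.factorial - 1) ^ n.choose k < k.factorial ^ n.choose k := by
  have hk1 : 1 ≤ k.factorial := k.factorial_pos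
  have hkpos : (0:ℝ) < (k.factorial : ℝ) := by exact_mod_cast k.factorial_pos
  have key : (1 : ℝ) - 1 / (k.factorial : ℝ)
      = ((k.factorial - 1 : ℕ) : ℝ) / (k.factorial : ℝ) := by
    rw [Nat.cast_sub hk1]
    field_simp
    simp
  rw [key, div_pow, ← mul_div_assoc, div_lt_one (by positivity)] at h
  exact_mod_cast h

end main

theorem tournament_exists_of_union_bound (k n : ℕ) (hk : 2 ≤ k) (hkn : k ≤ n)
    (h : (n.factorial : ℝ) * (1 - 1 / (k.factorial : ℝ)) ^ n.choose k < 1) :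
    ∃ H : OrientedHypergraph k (Fin n), IsTournament H ∧ PropertyO H := by
  classical
  obtain ⟨T, hT⟩ := exists_good k n (numeric_bound k n hk h)
  have hrange : ∀ S : KSets k n, Set.range ⇑(T S).1 = ↑S.1 := by
    intro S
    have h1 : Set.range ⇑(T S).1 = ↑(Finset.univ.map (T S).1) := by simp
    rw [h1, (T S).2]
  refine ⟨⟨Finset.univ.image (fun S : KSets k n => (T S).1), ?_⟩, ?_, ?_⟩
  · intro e he f hf hef
    simp only [Finset.mem_image, Finset.mem_univ, true_and] at he hf
    obtain ⟨S, rfl⟩ := he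
    obtain ⟨S', rfl⟩ := hf
    rw [hrange S, hrange S'] at hef
    have : S = S' := Subtype.ext (Finset.coe_injective hef)
    rw [this]
  · intro S hS
    exact ⟨(T ⟨S, hS⟩).1, Finset.mem_image.2 ⟨⟨S, hS⟩, Finset.mem_univ _, rfl⟩,
      hrange ⟨S, hS⟩⟩
  · intro r hr
    letI := Classical.decRel r
    have hn : 0 < n := lt_of_lt_of_le (lt_of_lt_of_le two_pos hk) hkn
    have hcard : ∀ x : Fin n, (Finset.univ.filter (fun y => r y x)).card < n := by
      intro x
      have hsub : (Finset.univ.filter (fun y => r y x)) ⊆ Finset.univ.erase x := by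
        intro y hy
        simp only [Finset.mem_filter, Finset.mem_univ, true_and] at hy
        exact Finset.mem_erase.2 ⟨fun hxy => (hr.irrefl x) (hxy ▸ hy), Finset.mem_univ _⟩
      calc (Finset.univ.filter (fun y => r y x)).card
          ≤ (Finset.univ.erase x).card := Finset.card_le_card hsub
        _ < Finset.univ.card := Finset.card_erase_lt_of_mem (Finset.mem_univ x)
        _ = n := by simp
    let σ0 : Fin n → Fin n := fun x => ⟨(Finset.univ.filter (fun y => r y x)).card, hcard x⟩
    have hmono : ∀ x y : Fin n, r x y → σ0 x < σ0 y := by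
      intro x y hxy
      have hss : (Finset.univ.filter (fun z => r z x)) ⊂ (Finset.univ.filter (fun z => r z y)) := by
        refine ⟨fun z hz => ?_, fun hcon => ?_⟩
        · simp only [Finset.mem_filter, Finset.mem_univ, true_and] at hz ⊢
          exact hr.trans _ _ _ hz hxy
        · have hx : x ∈ Finset.univ.filter (fun z => r z y) := by
            simp only [Finset.mem_filter, Finset.mem_univ, true_and]; exact hxy
          have := hcon hx
          simp only [Finset.mem_filter, Finset.mem_univ, true_and] at this
          exact (hr.irrefl x) this
      exact Finset.card_lt_card hss
    have hinj : Function.Injective σ0 := by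
      intro x y hxy
      rcases (or_iff_not_imp_left.2 fun a => or_iff_not_imp_right.2 fun b => hr.trichotomous x y a b) with h1 | h1 | h1
      · exact absurd hxy (ne_of_lt (hmono x y h1))
      · exact h1
      · exact absurd hxy.symm (ne_of_lt (hmono y x h1))
    let σ : Equiv.Perm (Fin n) := Equiv.ofBijective σ0 (Finite.injective_iff_bijective.1 hinj)
    obtain ⟨S, hS⟩ := hT σ
    refine ⟨(T S).1, Finset.mem_image.2 ⟨S, Finset.mem_univ _, rfl⟩, ?_⟩
    intro i j hij
    have h1 : σ0 ((T S).1 i) < σ0 ((T S).1 j) := hS i j hij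
    rcases (or_iff_not_imp_left.2 fun a => or_iff_not_imp_right.2 fun b => hr.trichotomous ((T S).1 i) ((T S).1 j) a b) with h2 | h2 | h2
    · exact h2
    · exact absurd (h2 ▸ h1) (lt_irrefl _)
    · exact absurd (lt_trans h1 (hmono _ _ h2)) (lt_irrefl _)
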